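/- Let a circle pattern have only convex kites and all intersection angles α(e) ≥ α₀ with 0 < α₀ ≤ π/2. Then for every interior vertex v, the set S(v) (intersection of the disc B(v) with the union of kites incident to v) contains a disc I(v) centered at the center c(v) of radius r(v)·sin α₀; in particular r(v) ≤ (1/sin α₀)·r_I(v). -/

import Mathlib

open Real Metric EuclideanGeometry

/-- Distance from the apex `c` to any point of the opposite edge `[p, b]` of a kite half
(triangle) is at least `r·sin α₀`, where `r = dist c p` and the angle at `p` is `α ∈ [α₀, π)`. -/
private lemma aux_dist_segment (c p b : ℂ) (r rb α α₀ : ℝ) (hr : 0 < r)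
    (hα₀ : 0 < α₀) (hα₀' : α₀ ≤ Real.pi / 2) (hα1 : α₀ ≤ α) (hα2 : α < Real.pi)
    (hcp : dist c p = r) (hpb : dist p b = rb)
    (hang : EuclideanGeometry.angle c p b = α) :
    ∀ m ∈ segment ℝ p b, r * Real.sin α₀ ≤ dist c m := by
  rintro m ⟨μ, lam, hμ, hlam, hsum, rfl⟩
  have hX : ‖c - p‖ = r := by rw [← dist_eq_norm]; exact hcp
  have hB : ‖b - p‖ = rb := by rw [← dist_eq_norm, dist_comm]; exact hpb
  have hinner : (inner ℝ (c - p) (b - p) : ℝ) = Real.cos α * (r * rb) := by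
    rw [← hang, EuclideanGeometry.angle, ← InnerProductGeometry.cos_angle_mul_norm_mul_norm]
    simp [vsub_eq_sub, hX, hB]
  have hm : c - (μ • p + lam • b) = (c - p) - lam • (b - p) := by
    have : μ = 1 - lam := by linarith
    subst this
    module
  have hd2 : dist c (μ • p + lam • b) ^ 2
      = r^2 - 2 * lam * (Real.cos α * (r * rb)) + lam^2 * rb^2 := by
    rw [dist_eq_norm, hm, norm_sub_sq_real, real_inner_smul_right, hinner, norm_smul, hX]
    rw [Real.norm_eq_abs, abs_of_nonneg hlam, hB]
    ring
  have hsin0 : 0 < Real.sin α₀ :=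
    Real.sin_pos_of_pos_of_lt_pi hα₀ (lt_of_le_of_lt hα₀' (half_lt_self Real.pi_pos))
  have hd : 0 ≤ dist c (μ • p + lam • b) := dist_nonneg
  have hrb' : 0 ≤ rb := by rw [← hpb]; exact dist_nonneg
  have key : (r * Real.sin α₀)^2 ≤ dist c (μ • p + lam • b) ^ 2 := by
    rcases le_or_gt 0 (Real.cos α) with hcos | hcos
    · have hle : α ≤ Real.pi / 2 := by
        by_contra h
        push_neg at h
        have := Real.cos_neg_of_pi_div_two_lt_of_lt h (by linarith [Real.pi_pos])
        linarith
      have hs : Real.sin α₀ ≤ Real.sin α :=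
        Real.sin_le_sin_of_le_of_le_pi_div_two (by linarith) hle hα1
      have hpyth := Real.sin_sq_add_cos_sq α
      rw [hd2]
      nlinarith [sq_nonneg (r * Real.cos α - lam * rb), mul_self_le_mul_self hsin0.le hs,
        sq_nonneg r, hpyth]
    · have h1 : Real.sin α₀ ≤ 1 := Real.sin_le_one _
      rw [hd2]
      nlinarith [mul_nonneg hlam (mul_nonneg hr.le (mul_nonneg hrb' (neg_nonneg.2 hcos.le))),
        mul_nonneg (mul_nonneg hlam hlam) (mul_nonneg hrb' hrb'),
        mul_self_le_mul_self hsin0.le h1, sq_nonneg r]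
  calc r * Real.sin α₀ = Real.sqrt ((r * Real.sin α₀)^2) := (Real.sqrt_sq (by positivity)).symm
    _ ≤ Real.sqrt (dist c (μ • p + lam • b) ^ 2) := Real.sqrt_le_sqrt key
    _ = _ := Real.sqrt_sq hd

/-- If `u - c` is a nonnegative combination of `p - c` and `b - c`, the opposite edge `[p, b]`
is at distance `≥ ρ` from `c`, and `dist u c < ρ`, then `u` is in the triangle `c p b`
(hence in the convex hull of any set containing the three vertices). -/
private lemma aux_mem_triangle (c p b : ℂ) (ρ : ℝ)
    (hdist : ∀ m ∈ segment ℝ p b, ρ ≤ dist c m)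
    (u : ℂ) (a e : ℝ) (ha : 0 ≤ a) (he : 0 ≤ e)
    (hu : u - c = a • (p - c) + e • (b - c))
    (hnear : dist u c < ρ) (s : Set ℂ) (hc : c ∈ s) (hps : p ∈ s) (hbs : b ∈ s) :
    u ∈ convexHull ℝ s := by
  by_cases hT0 : a + e = 0
  · have ha0 : a = 0 := by linarith
    have he0 : e = 0 := by linarith
    have : u = c := by
      have h := hu
      rw [ha0, he0] at h
      simp at h
      linear_combination (norm := module) h
    rw [this]
    exact subset_convexHull ℝ s hc
  · have hT : 0 < a + e := lt_of_le_of_ne (by linarith) (Ne.symm hT0)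
    set T := a + e with hTdef
    have hmseg : (a / T) • p + (e / T) • b ∈ segment ℝ p b :=
      ⟨a / T, e / T, div_nonneg ha hT.le, div_nonneg he hT.le, by field_simp; exact hTdef.symm, rfl⟩
    set m := (a / T) • p + (e / T) • b with hmdef
    have h1 : T • m = a • p + e • b := by
      rw [hmdef, smul_add, smul_smul, smul_smul, mul_div_cancel₀ _ hT0, mul_div_cancel₀ _ hT0]
    have hum : u - c = T • (m - c) := by
      rw [smul_sub, h1, hu]
      module
    have hT1 : T ≤ 1 := by
      by_contra h
      push_neg at h
      have h1' : dist u c = T * dist m c := by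
        rw [dist_eq_norm, dist_eq_norm, hum, norm_smul, Real.norm_eq_abs, abs_of_nonneg hT.le]
      have h2 : ρ ≤ dist c m := hdist m hmseg
      rw [dist_comm] at h2
      nlinarith [dist_nonneg (x := u) (y := c)]
    have husm : u ∈ segment ℝ c m :=
      ⟨1 - T, T, by linarith, hT.le, by ring, by
        have h3 : u = c + T • (m - c) := by rw [← hum]; ring
        rw [h3]; module⟩
    have hm_hull : m ∈ convexHull ℝ s :=
      (convex_convexHull ℝ s).segment_subset (subset_convexHull ℝ s hps)
        (subset_convexHull ℝ s hbs) hmseg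
    exact (convex_convexHull ℝ s).segment_subset (subset_convexHull ℝ s hc) hm_hull husm

theorem interior_vertex_contains_inner_disc
    {m : ℕ} (c : ℂ) (r : ℝ) (hr : 0 < r)
    (p b : Fin (m + 1) → ℂ) (rb : Fin (m + 1) → ℝ) (α : Fin (m + 1) → ℝ) (α₀ : ℝ)
    (hα₀ : 0 < α₀) (hα₀' : α₀ ≤ Real.pi / 2)
    (hα : ∀ i, α₀ ≤ α i ∧ α i < Real.pi)
    (hrb : ∀ i, 0 < rb i)
    (hp : ∀ i, dist c (p i) = r)
    (hb : ∀ i, dist (p i) (b i) = rb i ∧ dist (p (i + 1)) (b i) = rb i)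
    (hangle : ∀ i, EuclideanGeometry.angle c (p i) (b i) = α i ∧
      EuclideanGeometry.angle c (p (i + 1)) (b i) = α i)
    (hconvex : ∀ i, (segment ℝ c (b i) ∩ segment ℝ (p i) (p (i + 1))).Nonempty)
    (hsurround : ∀ u : ℂ, ∃ i : Fin (m + 1), ∃ s t : ℝ, 0 ≤ s ∧ 0 ≤ t ∧
      u - c = s • (p i - c) + t • (p (i + 1) - c)) :
    (ball c (r * Real.sin α₀) ⊆
      closedBall c r ∩ ⋃ i : Fin (m + 1), convexHull ℝ {c, p i, b i, p (i + 1)}) ∧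
    r ≤ (1 / Real.sin α₀) * (r * Real.sin α₀) := by
  have hsin0 : 0 < Real.sin α₀ :=
    Real.sin_pos_of_pos_of_lt_pi hα₀ (lt_of_le_of_lt hα₀' (half_lt_self Real.pi_pos))
  have hsin1 : Real.sin α₀ ≤ 1 := Real.sin_le_one _
  constructor
  · intro u hu
    have hunear : dist u c < r * Real.sin α₀ := mem_ball.mp hu
    obtain ⟨i, s, t, hs, ht, hdecomp⟩ := hsurround u
    -- distance bounds for the two opposite edges of the kite `i`
    have hd1 : ∀ m ∈ segment ℝ (p i) (b i), r * Real.sin α₀ ≤ dist c m :=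
      aux_dist_segment c (p i) (b i) r (rb i) (α i) α₀ hr hα₀ hα₀' (hα i).1 (hα i).2
        (hp i) (hb i).1 (hangle i).1
    have hd2 : ∀ m ∈ segment ℝ (p (i + 1)) (b i), r * Real.sin α₀ ≤ dist c m :=
      aux_dist_segment c (p (i + 1)) (b i) r (rb i) (α i) α₀ hr hα₀ hα₀' (hα i).1 (hα i).2
        (hp (i + 1)) (hb i).2 (hangle i).2
    have hcmem : c ∈ ({c, p i, b i, p (i + 1)} : Set ℂ) := by simp
    have hpmem : p i ∈ ({c, p i, b i, p (i + 1)} : Set ℂ) := by simp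
    have hbmem : b i ∈ ({c, p i, b i, p (i + 1)} : Set ℂ) := by simp
    have hp'mem : p (i + 1) ∈ ({c, p i, b i, p (i + 1)} : Set ℂ) := by simp
    constructor
    · -- membership in the closed ball
      rw [mem_closedBall]
      nlinarith [dist_nonneg (x := u) (y := c)]
    · rw [Set.mem_iUnion]
      refine ⟨i, ?_⟩
      obtain ⟨q, hq1, hq2⟩ := hconvex i
      obtain ⟨μ1, μ2, hμ1, hμ2, hμsum, hμeq⟩ := hq1
      obtain ⟨ν1, ν2, hν1, hν2, hνsum, hνeq⟩ := hq2
      have hμ1' : μ1 = 1 - μ2 := by linarith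
      have hν1' : ν1 = 1 - ν2 := by linarith
      subst hμ1'; subst hν1'
      have hkey : μ2 • (b i - c) = (1 - ν2) • (p i - c) + ν2 • (p (i + 1) - c) := by
        have h : (1 - μ2) • c + μ2 • b i = (1 - ν2) • p i + ν2 • p (i + 1) := by
          rw [hμeq, hνeq]
        linear_combination (norm := module) h
      -- complex-number versions
      have hkeyC : (μ2 : ℂ) * (b i - c)
          = ((1 : ℂ) - ν2) * (p i - c) + (ν2 : ℂ) * (p (i + 1) - c) := by
        have := hkey
        simp only [Complex.real_smul] at this
        push_cast at this
        exact this
      have hdecompC : u - c = (s : ℂ) * (p i - c) + (t : ℂ) * (p (i + 1) - c) := by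
        have := hdecomp
        simp only [Complex.real_smul] at this
        exact this
      by_cases hμ20 : μ2 = 0
      · -- degenerate case: c lies on the chord [p i, p (i+1)]
        subst hμ20
        have hyx : ((1 : ℂ) - ν2) * (p i - c) + (ν2 : ℂ) * (p (i + 1) - c) = 0 := by
          push_cast at hkeyC
          linear_combination -hkeyC
        have hν2pos : 0 < ν2 := by
          rcases lt_or_eq_of_le hν2 with h | h
          · exact h
          · exfalso
            have h0 : (p i - c) = 0 := by
              have hν2c : (ν2 : ℂ) = 0 := by exact_mod_cast h.symm
              linear_combination hyx - (p (i + 1) - c - (p i - c)) * hν2c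
            have : dist c (p i) = 0 := by
              rw [dist_eq_norm, show c - p i = -(p i - c) by ring, norm_neg, h0, norm_zero]
            rw [hp i] at this; linarith
        have hν2lt : ν2 < 1 := by
          rcases lt_or_eq_of_le (show ν2 ≤ 1 by linarith) with h | h
          · exact h
          · exfalso
            have h0 : (p (i + 1) - c) = 0 := by
              have hν2c : (ν2 : ℂ) = 1 := by exact_mod_cast h
              linear_combination hyx + ((p i - c) - (p (i + 1) - c)) * hν2c
            have : dist c (p (i + 1)) = 0 := by
              rw [dist_eq_norm, show c - p (i + 1) = -(p (i + 1) - c) by ring, norm_neg, h0,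
                norm_zero]
            rw [hp (i + 1)] at this; linarith
        have hν2ne : (ν2 : ℂ) ≠ 0 := by exact_mod_cast hν2pos.ne'
        have hν2ne' : (1 : ℂ) - (ν2 : ℂ) ≠ 0 := by
          intro h
          have h1 : (ν2 : ℂ) = 1 := by linear_combination -h
          have : ν2 = 1 := by exact_mod_cast h1
          linarith
        rcases le_or_gt (t * (1 - ν2)) (s * ν2) with hcase | hcase
        · -- use triangle c, p i, b i
          refine aux_mem_triangle c (p i) (b i) (r * Real.sin α₀) hd1 u
            ((s * ν2 - t * (1 - ν2)) / ν2) 0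
            (div_nonneg (by linarith) hν2pos.le) le_rfl ?_ hunear _ hcmem hpmem hbmem
          rw [hdecompC]
          simp only [Complex.real_smul, zero_smul, add_zero]
          push_cast
          field_simp
          linear_combination (t : ℂ) * hyx
        · -- use triangle c, p (i+1), b i
          refine aux_mem_triangle c (p (i + 1)) (b i) (r * Real.sin α₀) hd2 u
            ((t * (1 - ν2) - s * ν2) / (1 - ν2)) 0
            (div_nonneg (by linarith) (by linarith)) le_rfl ?_ hunear _ hcmem hp'mem hbmem
          rw [hdecompC]
          simp only [Complex.real_smul, zero_smul, add_zero]
          push_cast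
          field_simp
          linear_combination (s : ℂ) * hyx
      · have hμ2pos : 0 < μ2 := lt_of_le_of_ne hμ2 (Ne.symm hμ20)
        have hμ2ne : (μ2 : ℂ) ≠ 0 := by exact_mod_cast hμ20
        set β := (1 - ν2) / μ2 with hβdef
        set γ := ν2 / μ2 with hγdef
        have hβ : 0 ≤ β := div_nonneg (by linarith) hμ2pos.le
        have hγ : 0 ≤ γ := div_nonneg hν2 hμ2pos.le
        have hdC : b i - c = (β : ℂ) * (p i - c) + (γ : ℂ) * (p (i + 1) - c) := by
          rw [hβdef, hγdef]
          push_cast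
          field_simp
          linear_combination hkeyC
        by_cases hγ0 : γ = 0
        · -- b i - c is a nonnegative multiple of p i - c; use triangle c, p (i+1), b i
          have hβγ : β + γ = 1 / μ2 := by rw [hβdef, hγdef]; field_simp; ring
          have hβpos : 0 < β := by
            rw [hγ0, add_zero] at hβγ
            rw [hβγ]; positivity
          have hβne : (β : ℂ) ≠ 0 := by exact_mod_cast hβpos.ne'
          refine aux_mem_triangle c (p (i + 1)) (b i) (r * Real.sin α₀) hd2 u
            t (s / β) ht (div_nonneg hs hβpos.le) ?_ hunear _ hcmem hp'mem hbmem
          have hγ0C : (γ : ℂ) = 0 := by exact_mod_cast hγ0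
          rw [hdecompC]
          simp only [Complex.real_smul]
          rw [hdC, hγ0C]
          push_cast
          field_simp
          ring
        · have hγpos : 0 < γ := lt_of_le_of_ne hγ (Ne.symm hγ0)
          have hγne : (γ : ℂ) ≠ 0 := by exact_mod_cast hγpos.ne'
          rcases le_or_gt (t * β) (s * γ) with hcase | hcase
          · -- use triangle c, p i, b i
            refine aux_mem_triangle c (p i) (b i) (r * Real.sin α₀) hd1 u
              ((s * γ - t * β) / γ) (t / γ)
              (div_nonneg (by linarith) hγpos.le) (div_nonneg ht hγpos.le)
              ?_ hunear _ hcmem hpmem hbmem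
            rw [hdecompC]
            simp only [Complex.real_smul]
            rw [hdC]
            push_cast
            field_simp
            ring
          · -- use triangle c, p (i+1), b i
            have hβpos : 0 < β := by nlinarith
            have hβne : (β : ℂ) ≠ 0 := by exact_mod_cast hβpos.ne'
            refine aux_mem_triangle c (p (i + 1)) (b i) (r * Real.sin α₀) hd2 u
              ((t * β - s * γ) / β) (s / β)
              (div_nonneg (by linarith) hβpos.le) (div_nonneg hs hβpos.le)
              ?_ hunear _ hcmem hp'mem hbmem
            rw [hdecompC]
            simp only [Complex.real_smul]
            rw [hdC]
            push_cast
            field_simp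
            ring
  · have : (1 / Real.sin α₀) * (r * Real.sin α₀) = r := by field_simp
    linarith
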